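/- arXiv:0903.3331 — 4 statements merged into one kernel-verified Lean document; each statement's English description precedes it below -/
import Mathlib

section
/- For any d×d matrix B with strictly positive entries, let ν(B) = max over indices α,β,γ of b_{αβ}/b_{αγ}. Then for all vectors λ, λ' in the standard open simplex (all coordinates positive, coordinates summing to 1), one has ‖Bλ'/‖Bλ'‖₁ − Bλ/‖Bλ‖₁‖₁ ≤ ν(B)² · ‖λ − λ'‖₁, where ‖x‖₁ denotes the sum of absolute values of coordinates. -/
open Finset

/-- For a matrix `B` with strictly positive entries and `ν(B) = max_{α,β,γ} B α β / B α γ`,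
the normalized images of two points of the open simplex satisfy the Lipschitz-type bound
`‖Bλ'/|Bλ'| − Bλ/|Bλ|‖₁ ≤ ν(B)² ‖λ − λ'‖₁`. -/
theorem stmt_0 (d : ℕ) (hd : 0 < d) (B : Matrix (Fin d) (Fin d) ℝ)
    (hB : ∀ i j, 0 < B i j)
    (ν : ℝ) (hν : ν = ⨆ α : Fin d, ⨆ β : Fin d, ⨆ γ : Fin d, B α β / B α γ)
    (lam lam' : Fin d → ℝ)
    (hlam : (∀ i, 0 < lam i) ∧ ∑ i, lam i = 1)
    (hlam' : (∀ i, 0 < lam' i) ∧ ∑ i, lam' i = 1) :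
    ∑ i, |B.mulVec lam' i / (∑ j, |B.mulVec lam' j|)
          - B.mulVec lam i / (∑ j, |B.mulVec lam j|)|
      ≤ ν ^ 2 * ∑ i, |lam i - lam' i| := by
  obtain ⟨hl, hs⟩ := hlam
  obtain ⟨hl', hs'⟩ := hlam'
  haveI : Nonempty (Fin d) := ⟨⟨0, hd⟩⟩
  have huniv : (univ : Finset (Fin d)).Nonempty := univ_nonempty
  -- ν bounds
  have hν2 : ∀ α β γ, B α β / B α γ ≤ ν := by
    intro α β γ
    rw [hν]
    have h3 : B α β / B α γ ≤ ⨆ γ, B α β / B α γ :=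
      le_ciSup (f := fun γ => B α β / B α γ)
        (Set.Finite.bddAbove (Set.finite_range _)) γ
    have h2 : (⨆ γ, B α β / B α γ) ≤ ⨆ β, ⨆ γ, B α β / B α γ :=
      le_ciSup (f := fun β => ⨆ γ, B α β / B α γ)
        (Set.Finite.bddAbove (Set.finite_range _)) β
    have h1 : (⨆ β, ⨆ γ, B α β / B α γ) ≤ ⨆ α, ⨆ β, ⨆ γ, B α β / B α γ :=
      le_ciSup (f := fun α => ⨆ β, ⨆ γ, B α β / B α γ)
        (Set.Finite.bddAbove (Set.finite_range _)) α
    linarith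
  have hνB : ∀ α β γ, B α β ≤ ν * B α γ := fun α β γ =>
    (div_le_iff₀ (hB α γ)).mp (hν2 α β γ)
  have hν1 : (1:ℝ) ≤ ν := by
    have h := hν2 ⟨0,hd⟩ ⟨0,hd⟩ ⟨0,hd⟩
    rwa [div_self (hB _ _).ne'] at h
  set u := B.mulVec lam with hu_def
  set v := B.mulVec lam' with hv_def
  have humv : ∀ i, u i = ∑ j, B i j * lam j := fun i => rfl
  have hvmv : ∀ i, v i = ∑ j, B i j * lam' j := fun i => rfl
  have hu : ∀ i, 0 < u i := fun i => by
    rw [humv]; exact Finset.sum_pos (fun j _ => mul_pos (hB i j) (hl j)) huniv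
  have hv : ∀ i, 0 < v i := fun i => by
    rw [hvmv]; exact Finset.sum_pos (fun j _ => mul_pos (hB i j) (hl' j)) huniv
  set S := ∑ j, u j with hS_def
  set S' := ∑ j, v j with hS'_def
  have hS : 0 < S := Finset.sum_pos (fun j _ => hu j) huniv
  have hS' : 0 < S' := Finset.sum_pos (fun j _ => hv j) huniv
  have habs : (∑ j, |u j|) = S := by
    rw [hS_def]; exact Finset.sum_congr rfl (fun j _ => abs_of_pos (hu j))
  have habs' : (∑ j, |v j|) = S' := by
    rw [hS'_def]; exact Finset.sum_congr rfl (fun j _ => abs_of_pos (hv j))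
  set Δ := ∑ i, |lam i - lam' i| with hΔ_def
  have hΔ0 : 0 ≤ Δ := Finset.sum_nonneg (fun i _ => abs_nonneg _)
  have hδsum : ∑ j, (lam' j - lam j) = 0 := by
    rw [Finset.sum_sub_distrib, hs, hs']; ring
  -- per-index bound on |v i - u i|
  set m : Fin d → ℝ := fun i => inf' univ huniv (B i) with hm_def
  have hm_le : ∀ i j, m i ≤ B i j := fun i j => inf'_le _ (mem_univ j)
  have key : ∀ i, |v i - u i| ≤ ((ν - 1) * m i / 2) * Δ := by
    intro i
    set M : ℝ := sup' univ huniv (B i) with hM_def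
    have hM_ge : ∀ j, B i j ≤ M := fun j => le_sup' _ (mem_univ j)
    have hMm : M - m i ≤ (ν - 1) * m i := by
      obtain ⟨β, -, hβ⟩ := Finset.exists_mem_eq_sup' huniv (B i)
      obtain ⟨γ, -, hγ⟩ := Finset.exists_mem_eq_inf' huniv (B i)
      rw [hM_def, hβ]; rw [hm_def]; simp only; rw [hγ]
      have := hνB i β γ
      nlinarith [this]
    set c : ℝ := (M + m i) / 2 with hc_def
    have hdiff : v i - u i = ∑ j, (B i j - c) * (lam' j - lam j) := by
      rw [hvmv, humv]
      rw [← Finset.sum_sub_distrib]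
      rw [Finset.sum_congr rfl (fun j _ => by ring :
        ∀ j ∈ univ, B i j * lam' j - B i j * lam j
          = (B i j - c) * (lam' j - lam j) + c * (lam' j - lam j))]
      rw [Finset.sum_add_distrib, ← Finset.mul_sum, hδsum, mul_zero, add_zero]
    rw [hdiff]
    calc |∑ j, (B i j - c) * (lam' j - lam j)|
        ≤ ∑ j, |(B i j - c) * (lam' j - lam j)| := Finset.abs_sum_le_sum_abs _ _
      _ ≤ ∑ j, ((ν - 1) * m i / 2) * |lam j - lam' j| := by
          apply Finset.sum_le_sum
          intro j _
          rw [abs_mul, abs_sub_comm (lam' j) (lam j)]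
          apply mul_le_mul_of_nonneg_right _ (abs_nonneg _)
          rw [abs_le]
          constructor
          · have := hm_le i j; rw [hc_def]; nlinarith [hMm]
          · have := hM_ge j; rw [hc_def]; nlinarith [hMm]
      _ = ((ν - 1) * m i / 2) * Δ := by rw [← Finset.mul_sum]
  -- sum of |v - u|
  set T := ∑ i, |v i - u i| with hT_def
  have hmv : ∀ i, m i ≤ v i := by
    intro i
    rw [hvmv]
    calc m i = ∑ j, m i * lam' j := by rw [← Finset.mul_sum, hs', mul_one]
      _ ≤ ∑ j, B i j * lam' j :=
        Finset.sum_le_sum (fun j _ => mul_le_mul_of_nonneg_right (hm_le i j) (hl' j).le)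
  have hTbound : T ≤ ((ν - 1) / 2) * S' * Δ := by
    calc T ≤ ∑ i, ((ν - 1) * m i / 2) * Δ := Finset.sum_le_sum (fun i _ => key i)
      _ = ((ν - 1) / 2) * (∑ i, m i) * Δ := by
          rw [← Finset.sum_mul]
          congr 1
          rw [Finset.mul_sum]
          exact Finset.sum_congr rfl (fun i _ => by ring)
      _ ≤ ((ν - 1) / 2) * S' * Δ := by
          apply mul_le_mul_of_nonneg_right _ hΔ0
          apply mul_le_mul_of_nonneg_left _ (by linarith : (0:ℝ) ≤ (ν - 1) / 2)
          exact Finset.sum_le_sum (fun i _ => hmv i)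
  have hSS' : |S - S'| ≤ T := by
    rw [hT_def]
    calc |S - S'| = |∑ i, (u i - v i)| := by rw [Finset.sum_sub_distrib]
      _ ≤ ∑ i, |u i - v i| := Finset.abs_sum_le_sum_abs _ _
      _ = ∑ i, |v i - u i| := Finset.sum_congr rfl (fun i _ => abs_sub_comm _ _)
  -- main estimate
  have main : ∑ i, |v i / S' - u i / S| ≤ 2 * T / S' := by
    have hterm : ∀ i, v i / S' - u i / S = (v i - u i) / S' + u i * (S - S') / (S * S') := by
      intro i; field_simp; ring
    calc ∑ i, |v i / S' - u i / S|
        ≤ ∑ i, (|v i - u i| / S' + u i * |S - S'| / (S * S')) := by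
          apply Finset.sum_le_sum
          intro i _
          rw [hterm i]
          refine le_trans (abs_add_le _ _) ?_
          rw [abs_div, abs_div, abs_mul, abs_of_pos hS', abs_of_pos (hu i),
            abs_of_pos (mul_pos hS hS')]
      _ = T / S' + |S - S'| / S' := by
          rw [Finset.sum_add_distrib, ← Finset.sum_div, ← hT_def, ← Finset.sum_div,
            ← Finset.sum_mul, ← hS_def]
          congr 1
          rw [mul_div_mul_left _ _ hS.ne']
      _ ≤ T / S' + T / S' := by
          gcongr
      _ = 2 * T / S' := by ring
  have final : ∑ i, |v i / S' - u i / S| ≤ ν ^ 2 * Δ := by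
    calc ∑ i, |v i / S' - u i / S| ≤ 2 * T / S' := main
      _ ≤ 2 * (((ν - 1) / 2) * S' * Δ) / S' := by gcongr
      _ = (ν - 1) * Δ := by field_simp
      _ ≤ ν ^ 2 * Δ :=
          mul_le_mul_of_nonneg_right (by nlinarith [hν1] : ν - 1 ≤ ν ^ 2) hΔ0
  rw [habs, habs']
  exact final
end

section
/- The set DC₁ of irrational numbers α ∈ [0,1) for which there exists c > 0 with |p − qα| > c/|q| for all integers p and all nonzero integers q is dense in [0,1). -/
noncomputable def myPsi : ℝ := (Real.sqrt 5 - 1) / 2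

lemma sqrt5_irr : Irrational (Real.sqrt 5) := by
  have h : Nat.Prime 5 := by norm_num
  simpa using h.irrational_sqrt

lemma myPsi_irr : Irrational myPsi := by
  have h : Real.sqrt 5 = ((2:ℚ):ℝ) * myPsi + ((1:ℚ):ℝ) := by
    unfold myPsi; push_cast; ring
  have h2 := sqrt5_irr
  rw [h] at h2
  exact Irrational.of_ratCast_mul 2 (Irrational.of_add_ratCast 1 h2)

lemma psi_bad (p q : ℤ) (hq : q ≠ 0) :
    (1/10 : ℝ)/|(q:ℝ)| < |(p:ℝ) - (q:ℝ) * myPsi| := by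
  have hs : Real.sqrt 5 ^ 2 = 5 := Real.sq_sqrt (by norm_num)
  have hs0 : (0:ℝ) ≤ Real.sqrt 5 := Real.sqrt_nonneg 5
  have hs3 : Real.sqrt 5 < 3 := by nlinarith
  set s := Real.sqrt 5 with hsdef
  have hq1 : (1:ℝ) ≤ |(q:ℝ)| := by exact_mod_cast Int.one_le_abs hq
  have hq0 : (0:ℝ) < |(q:ℝ)| := by linarith
  set A : ℝ := (p:ℝ) - (q:ℝ) * myPsi with hA
  set A' : ℝ := (p:ℝ) + (q:ℝ) * (s+1)/2 with hA'
  have hAA : A * A' = ((p^2 + p*q - q^2 : ℤ) : ℝ) := by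
    rw [hA, hA']
    unfold myPsi
    rw [← hsdef]
    push_cast
    linear_combination (-(q:ℝ)^2/4) * hs
  have hN : (p^2 + p*q - q^2 : ℤ) ≠ 0 := by
    intro h0
    have hsq : (2*p+q)^2 = 5*q^2 := by linear_combination 4*h0
    have hrat : s = ((((2*p+q).natAbs : ℚ) / (q.natAbs : ℚ) : ℚ) : ℝ) := by
      have hqn : ((q.natAbs : ℝ)) ≠ 0 := by
        simp [Int.natAbs_ne_zero, hq]
      have h2 : ((((2*p+q).natAbs : ℚ) / (q.natAbs : ℚ) : ℚ) : ℝ)^2 = 5 := by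
        push_cast
        rw [div_pow]
        rw [div_eq_iff (by positivity)]
        have e1 : (((2*p+q).natAbs : ℝ))^2 = (((2*p+q) : ℤ) : ℝ)^2 := by
          rw [Nat.cast_natAbs, Int.cast_abs, sq_abs]
        have e2 : ((q.natAbs : ℝ))^2 = ((q : ℤ) : ℝ)^2 := by
          rw [Nat.cast_natAbs, Int.cast_abs, sq_abs]
        rw [e1, e2]
        exact_mod_cast congrArg (fun z : ℤ => (z : ℝ)) hsq
      have hnn : (0:ℝ) ≤ ((((2*p+q).natAbs : ℚ) / (q.natAbs : ℚ) : ℚ) : ℝ) := by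
        positivity
      nlinarith [h2, hnn, hs, hs0]
    apply Rat.not_irrational (((2*p+q).natAbs : ℚ) / (q.natAbs : ℚ))
    rw [← hrat]
    exact sqrt5_irr
  have h1 : (1:ℝ) ≤ |A| * |A'| := by
    rw [← abs_mul, hAA]
    exact_mod_cast Int.one_le_abs hN
  by_cases hA1 : 1 ≤ |A|
  · have : (1/10 : ℝ)/|(q:ℝ)| ≤ 1/10 := by
      rw [div_le_iff₀ hq0]; nlinarith
    linarith
  · push_neg at hA1
    have hdiff : A' = A + (q:ℝ) * s := by
      rw [hA, hA']; unfold myPsi; rw [← hsdef]; ring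
    have habs' : |A'| < 4 * |(q:ℝ)| := by
      calc |A'| ≤ |A| + |(q:ℝ) * s| := hdiff ▸ abs_add_le _ _
        _ = |A| + |(q:ℝ)| * s := by rw [abs_mul, abs_of_nonneg hs0]
        _ < 1 + |(q:ℝ)| * 3 := by nlinarith
        _ ≤ 4 * |(q:ℝ)| := by nlinarith
    rw [div_lt_iff₀ hq0]
    nlinarith [abs_nonneg A, abs_nonneg A']

lemma shift_bad (r : ℚ) (p q : ℤ) (hq : q ≠ 0) :
    (1/(10 * (r.den:ℝ)^2))/|(q:ℝ)| < |(p:ℝ) - (q:ℝ) * (myPsi + (r:ℝ))| := by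
  have hb : (0:ℝ) < (r.den : ℝ) := by exact_mod_cast r.pos
  have hQ : q * (r.den : ℤ) ≠ 0 := mul_ne_zero hq (by exact_mod_cast r.den_nz)
  have key := psi_bad (p * r.den - q * r.num) (q * r.den) hQ
  have hr : (r:ℝ) = (r.num : ℝ) / (r.den : ℝ) := by rw [Rat.cast_def]
  have heq : |(p:ℝ) - (q:ℝ) * (myPsi + (r:ℝ))| =
      |((p * r.den - q * r.num : ℤ) : ℝ) - ((q * r.den : ℤ) : ℝ) * myPsi| / (r.den : ℝ) := by
    rw [← abs_of_pos hb, ← abs_div]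
    congr 1
    push_cast
    rw [hr]
    field_simp
    ring
  rw [heq]
  rw [lt_div_iff₀ hb]
  have habsQ : |((q * r.den : ℤ) : ℝ)| = |(q:ℝ)| * (r.den : ℝ) := by
    push_cast
    rw [abs_mul, abs_of_pos hb]
  rw [habsQ] at key
  have hq0 : (0:ℝ) < |(q:ℝ)| := by
    have : (1:ℝ) ≤ |(q:ℝ)| := by exact_mod_cast Int.one_le_abs hq
    linarith
  calc 1 / (10 * (r.den:ℝ)^2) / |(q:ℝ)| * (r.den:ℝ)
      = 1/10 / (|(q:ℝ)| * (r.den:ℝ)) := by field_simp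
    _ < _ := key

/-- The set `DC₁` of badly approximable irrationals in `[0,1)` is dense in `[0,1)`. -/
theorem stmt_3 :
    let DC₁ : Set ℝ :=
      {α | α ∈ Set.Ico (0 : ℝ) 1 ∧ Irrational α ∧
        ∃ c > (0 : ℝ), ∀ p : ℤ, ∀ q : ℤ, q ≠ 0 → c / |(q : ℝ)| < |(p : ℝ) - (q : ℝ) * α|}
    ∀ x ∈ Set.Ico (0 : ℝ) 1, x ∈ closure DC₁ := by
  intro DC₁ x hx
  rw [Metric.mem_closure_iff]
  intro ε hε
  obtain ⟨hx0, hx1⟩ := hx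
  set m : ℝ := min (x + ε) 1 with hm
  have hxm : x < m := lt_min (by linarith) hx1
  obtain ⟨r, hr1, hr2⟩ := exists_rat_btwn (show x - myPsi < m - myPsi by linarith)
  refine ⟨myPsi + r, ⟨⟨?_, ?_⟩, ?_, ?_⟩, ?_⟩
  · have : x < myPsi + r := by linarith
    linarith
  · have : myPsi + r < m := by linarith
    have : m ≤ 1 := min_le_right _ _
    linarith
  · exact myPsi_irr.add_ratCast r
  · refine ⟨1/(10 * (r.den:ℝ)^2), by positivity, ?_⟩
    intro p q hq
    exact shift_bad r p q hq
  · have h1 : x < myPsi + r := by linarith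
    have h2 : myPsi + r < m := by linarith
    have h3 : m ≤ x + ε := min_le_left _ _
    rw [Real.dist_eq, abs_lt]
    constructor <;> linarith
end

section
/- Let d ≥ 4 and let π̄ = (π̄₀, π̄₁) be a standard pair of bijections of {1,…,d} with π̄₀ the identity (so π̄₁(1) = d and π̄₁(d) = 1), satisfying the condition that π̄₁(k+1) ≠ π̄₁(k) + 1 for 1 ≤ k < d. Let Ω be the antisymmetric d×d matrix with Ω_{αβ} = +1 if π̄₁(α) > π̄₁(β) and α < β, Ω_{αβ} = −1 if π̄₁(α) < π̄₁(β) and α > β, and 0 otherwise. Let A ⊆ ℝ be an additive subgroup, let τ ∈ ℝ^d have coordinates τ₁,…,τ_d independent over A, and let h = −Ωτ. Then h_{d−2}, h_{d−1}, h_d are independent over A. -/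
open Finset

set_option maxHeartbeats 1000000 in
/-- For a standard pair `π̄` in `𝒫*` with `π̄₀ = id` on `{1,…,d}`, `d ≥ 4`, translation
matrix `Ω`, and `τ` with coordinates independent over an additive subgroup `A`, the last
three coordinates of `h = −Ωτ` are independent over `A`. -/
theorem stmt_6 (d : ℕ) (hd : 4 ≤ d) (π₁ : Equiv.Perm (Fin d))
    (hstd₁ : (π₁ ⟨0, by omega⟩ : ℕ) = d - 1)
    (hstd₂ : (π₁ ⟨d - 1, by omega⟩ : ℕ) = 0)
    (hstar : ∀ k : ℕ, (hk : k + 1 < d) →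
      (π₁ ⟨k + 1, hk⟩ : ℕ) ≠ (π₁ ⟨k, by omega⟩ : ℕ) + 1)
    (Ω : Matrix (Fin d) (Fin d) ℝ)
    (hΩ : ∀ α β, Ω α β =
      if π₁ β < π₁ α ∧ α < β then 1
      else if π₁ α < π₁ β ∧ β < α then -1 else 0)
    (A : AddSubgroup ℝ) (τ : Fin d → ℝ)
    (hτ : ∀ a : Fin d → ℝ, (∀ i, a i ∈ A) → ∑ i, a i * τ i = 0 → ∀ i, a i = 0)
    (h : Fin d → ℝ) (hh : h = -(Ω.mulVec τ)) :
    ∀ a₁ a₂ a₃ : ℝ, a₁ ∈ A → a₂ ∈ A → a₃ ∈ A →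
      a₁ * h ⟨d - 3, by omega⟩ + a₂ * h ⟨d - 2, by omega⟩ + a₃ * h ⟨d - 1, by omega⟩ = 0 →
      a₁ = 0 ∧ a₂ = 0 ∧ a₃ = 0 := by
  intro a₁ a₂ a₃ ha₁ ha₂ ha₃ heq
  obtain ⟨u, hu⟩ : ∃ u : Fin d, (u : ℕ) = d - 3 := ⟨⟨d - 3, by omega⟩, rfl⟩
  obtain ⟨v, hv⟩ : ∃ v : Fin d, (v : ℕ) = d - 2 := ⟨⟨d - 2, by omega⟩, rfl⟩
  obtain ⟨w, hw⟩ : ∃ w : Fin d, (w : ℕ) = d - 1 := ⟨⟨d - 1, by omega⟩, rfl⟩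
  obtain ⟨i0, hi0⟩ : ∃ i0 : Fin d, (i0 : ℕ) = 0 := ⟨⟨0, by omega⟩, rfl⟩
  have hπ0 : (π₁ i0 : ℕ) = d - 1 := by
    have : i0 = ⟨0, by omega⟩ := Fin.ext (by simp only [Fin.val_mk]; omega)
    rw [this]; exact hstd₁
  have hπw : (π₁ w : ℕ) = 0 := by
    have : w = ⟨d - 1, by omega⟩ := Fin.ext (by simp only [Fin.val_mk]; omega)
    rw [this]; exact hstd₂
  have hne : ∀ p q : Fin d, (p : ℕ) ≠ (q : ℕ) → (π₁ p : ℕ) ≠ (π₁ q : ℕ) := by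
    intro p q hpq hc
    exact hpq (congrArg Fin.val (π₁.injective (Fin.ext hc)))
  -- entry lemmas
  have entry_neg : ∀ α β : Fin d, (β : ℕ) < α → (π₁ α : ℕ) < π₁ β → Ω α β = -1 := by
    intro α β h1 h2
    rw [hΩ, if_neg, if_pos]
    · exact ⟨by rwa [Fin.lt_def], by rwa [Fin.lt_def]⟩
    · rintro ⟨c1, c2⟩; rw [Fin.lt_def] at c2; omega
  have entry_pos : ∀ α β : Fin d, (α : ℕ) < β → (π₁ β : ℕ) < π₁ α → Ω α β = 1 := by
    intro α β h1 h2
    rw [hΩ, if_pos]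
    exact ⟨by rwa [Fin.lt_def], by rwa [Fin.lt_def]⟩
  have entry_zero : ∀ α β : Fin d, (β : ℕ) < α → (π₁ β : ℕ) < π₁ α → Ω α β = 0 := by
    intro α β h1 h2
    rw [hΩ, if_neg, if_neg]
    · rintro ⟨c1, c2⟩; rw [Fin.lt_def] at c1; omega
    · rintro ⟨c1, c2⟩; rw [Fin.lt_def] at c2; omega
  have entry_diag : ∀ α : Fin d, Ω α α = 0 := by
    intro α
    rw [hΩ, if_neg, if_neg]
    · rintro ⟨c1, c2⟩; exact lt_irrefl _ c2
    · rintro ⟨c1, c2⟩; exact lt_irrefl _ c2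
  -- the coefficient vector
  obtain ⟨a, ha⟩ : ∃ a : Fin d → ℝ,
      a = fun j => -(a₁ * Ω u j + a₂ * Ω v j + a₃ * Ω w j) := ⟨_, rfl⟩
  have haj : ∀ j, a j = -(a₁ * Ω u j + a₂ * Ω v j + a₃ * Ω w j) := fun j => by rw [ha]
  have haA : ∀ j, a j ∈ A := by
    have key : ∀ (x : ℝ), x ∈ A → ∀ (α β : Fin d), x * Ω α β ∈ A := by
      intro x hx α β
      rw [hΩ]
      split_ifs
      · simpa using hx
      · simpa using A.neg_mem hx
      · simpa using A.zero_mem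
    intro j
    rw [haj]
    exact A.neg_mem (A.add_mem (A.add_mem (key _ ha₁ u j) (key _ ha₂ v j)) (key _ ha₃ w j))
  have hsum : ∑ j, a j * τ j = 0 := by
    have hhu : h ⟨d - 3, by omega⟩ = -∑ j, Ω u j * τ j := by
      have : (⟨d - 3, by omega⟩ : Fin d) = u := Fin.ext (by simp only [Fin.val_mk]; omega)
      rw [this, hh]
      simp [Matrix.mulVec, dotProduct]
    have hhv : h ⟨d - 2, by omega⟩ = -∑ j, Ω v j * τ j := by
      have : (⟨d - 2, by omega⟩ : Fin d) = v := Fin.ext (by simp only [Fin.val_mk]; omega)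
      rw [this, hh]
      simp [Matrix.mulVec, dotProduct]
    have hhw : h ⟨d - 1, by omega⟩ = -∑ j, Ω w j * τ j := by
      have : (⟨d - 1, by omega⟩ : Fin d) = w := Fin.ext (by simp only [Fin.val_mk]; omega)
      rw [this, hh]
      simp [Matrix.mulVec, dotProduct]
    rw [hhu, hhv, hhw] at heq
    rw [← heq]
    simp only [ha, mul_neg, Finset.mul_sum, ← Finset.sum_neg_distrib,
      ← Finset.sum_add_distrib]
    exact Finset.sum_congr rfl fun j _ => by ring
  have hz := hτ a haA hsum
  have πu_lt : (π₁ u : ℕ) < d - 1 := by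
    have := (π₁ u).isLt
    have := hne u i0 (by omega)
    omega
  have πv_lt : (π₁ v : ℕ) < d - 1 := by
    have := (π₁ v).isLt
    have := hne v i0 (by omega)
    omega
  have πu_pos : 0 < (π₁ u : ℕ) := by
    have := hne u w (by omega)
    omega
  have πv_pos : 0 < (π₁ v : ℕ) := by
    have := hne v w (by omega)
    omega
  -- column 0
  have c0 := hz i0
  rw [haj] at c0
  rw [entry_neg u i0 (by omega) (by omega),
    entry_neg v i0 (by omega) (by omega),
    entry_neg w i0 (by omega) (by omega)] at c0
  -- column d-1
  have cw := hz w
  rw [haj] at cw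
  rw [entry_pos u w (by omega) (by omega),
    entry_pos v w (by omega) (by omega),
    entry_diag w] at cw
  have ha3 : a₃ = 0 := by linarith
  have ha12 : a₁ + a₂ = 0 := by linarith
  have hππ : (π₁ u : ℕ) ≠ (π₁ v : ℕ) := hne u v (by omega)
  have ha1 : a₁ = 0 := by
    rcases hππ.lt_or_gt with hlt | hgt
    · -- π₁ u < π₁ v; pick s with π₁ s = π₁ u + 1
      have hstar' := hstar (d - 3) (by omega)
      have hmkv : (⟨d - 3 + 1, by omega⟩ : Fin d) = v := Fin.ext (by simp only [Fin.val_mk]; omega)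
      have hmku : (⟨d - 3, by omega⟩ : Fin d) = u := Fin.ext (by simp only [Fin.val_mk]; omega)
      rw [hmkv, hmku] at hstar'
      have hmlt : (π₁ u : ℕ) + 1 < (π₁ v : ℕ) := by omega
      have hm : (π₁ u : ℕ) + 1 < d := by omega
      obtain ⟨s, hs⟩ : ∃ s : Fin d, s = π₁.symm ⟨(π₁ u : ℕ) + 1, hm⟩ := ⟨_, rfl⟩
      have hπs : (π₁ s : ℕ) = (π₁ u : ℕ) + 1 := by rw [hs]; simp
      have hs_lt : (s : ℕ) < d - 3 := by
        have h1 : (s : ℕ) ≠ d - 3 := fun hc => by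
          have : s = u := Fin.ext (by omega)
          rw [this] at hπs; omega
        have h2 : (s : ℕ) ≠ d - 2 := fun hc => by
          have : s = v := Fin.ext (by omega)
          rw [this] at hπs; omega
        have h3 : (s : ℕ) ≠ d - 1 := fun hc => by
          have : s = w := Fin.ext (by omega)
          rw [this] at hπs; omega
        have := s.isLt
        omega
      have cs := hz s
      rw [haj] at cs
      rw [entry_neg u s (by omega) (by omega),
        entry_zero v s (by omega) (by omega),
        entry_neg w s (by omega) (by omega)] at cs
      linarith
    · -- π₁ v < π₁ u; use column v
      have cv := hz v
      rw [haj] at cv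
      rw [entry_pos u v (by omega) (by omega),
        entry_diag v,
        entry_neg w v (by omega) (by omega)] at cv
      linarith
  exact ⟨ha1, by linarith, ha3⟩
end

section
/- Let π be an irreducible pair on a d-element alphabet, τ ∈ 𝒯⁺_π (i.e. Σ_{π₀(α)≤k} τ_α > 0 and Σ_{π₁(α)≤k} τ_α < 0 for 1 ≤ k < d), and let Ω_π be the matrix with Ω_{αβ} = +1 if π₁(α) > π₁(β), π₀(α) < π₀(β); −1 if π₁(α) < π₁(β), π₀(α) > π₀(β); 0 otherwise. Then all coordinates of h = −Ω_π τ are strictly positive. -/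
open Finset

/-- For `τ ∈ 𝒯⁺_π` and the translation matrix `Ω_π`, all coordinates of `h = −Ω_π τ`
are strictly positive. -/
theorem stmt_14 {A : Type*} [Fintype A] [DecidableEq A] (d : ℕ) (hd : 2 ≤ d)
    (π₀ π₁ : A ≃ Fin d)
    (Ω : Matrix A A ℝ)
    (hΩ : ∀ α β, Ω α β =
      if π₁ β < π₁ α ∧ π₀ α < π₀ β then 1
      else if π₁ α < π₁ β ∧ π₀ β < π₀ α then -1 else 0)
    (τ : A → ℝ)
    (hτ : ∀ k : ℕ, 0 < k → k < d →
      (0 < ∑ α ∈ Finset.univ.filter (fun α => (π₀ α : ℕ) < k), τ α) ∧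
      (∑ α ∈ Finset.univ.filter (fun α => (π₁ α : ℕ) < k), τ α < 0)) :
    ∀ α, 0 < (-(Ω.mulVec τ)) α := by
  intro α
  have key : (-(Ω.mulVec τ)) α =
      (∑ β ∈ Finset.univ.filter (fun β => (π₀ β : ℕ) < (π₀ α : ℕ)), τ β)
      - ∑ β ∈ Finset.univ.filter (fun β => (π₁ β : ℕ) < (π₁ α : ℕ)), τ β := by
    simp only [Pi.neg_apply, Matrix.mulVec, dotProduct, ← Finset.sum_neg_distrib,
      sum_filter, ← Finset.sum_sub_distrib]
    apply Finset.sum_congr rfl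
    intro β _
    rw [hΩ]
    rcases eq_or_ne β α with rfl | hne
    · simp
    · have h0 : π₀ β ≠ π₀ α := fun h => hne (π₀.injective h)
      have h1 : π₁ β ≠ π₁ α := fun h => hne (π₁.injective h)
      rcases h0.lt_or_gt with h0' | h0' <;> rcases h1.lt_or_gt with h1' | h1' <;>
        simp [h0', h1', h0'.not_gt, h1'.not_gt, Fin.lt_def] <;> ring
  rw [key]
  rcases Nat.eq_zero_or_pos (π₀ α : ℕ) with h0 | h0
  · rcases Nat.eq_zero_or_pos (π₁ α : ℕ) with h1 | h1
    · exfalso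
      obtain ⟨hA, hB⟩ := hτ 1 one_pos (by omega)
      have e0 : Finset.univ.filter (fun β => (π₀ β : ℕ) < 1) = {α} := by
        ext β
        simp only [mem_filter, mem_univ, true_and, mem_singleton, Nat.lt_one_iff]
        constructor
        · intro h
          apply π₀.injective
          exact Fin.ext (by omega)
        · rintro rfl; omega
      have e1 : Finset.univ.filter (fun β => (π₁ β : ℕ) < 1) = {α} := by
        ext β
        simp only [mem_filter, mem_univ, true_and, mem_singleton, Nat.lt_one_iff]
        constructor
        · intro h
          apply π₁.injective
          exact Fin.ext (by omega)
        · rintro rfl; omega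
      rw [e0, Finset.sum_singleton] at hA
      rw [e1, Finset.sum_singleton] at hB
      linarith
    · have hB := (hτ _ h1 (π₁ α).isLt).2
      have e0 : Finset.univ.filter (fun β => (π₀ β : ℕ) < (π₀ α : ℕ)) = ∅ := by
        ext β; simp [h0]
      rw [e0, Finset.sum_empty]
      linarith
  · have hA := (hτ _ h0 (π₀ α).isLt).1
    rcases Nat.eq_zero_or_pos (π₁ α : ℕ) with h1 | h1
    · have e1 : Finset.univ.filter (fun β => (π₁ β : ℕ) < (π₁ α : ℕ)) = ∅ := by
        ext β; simp [h1]
      rw [e1, Finset.sum_empty]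
      linarith
    · have hB := (hτ _ h1 (π₁ α).isLt).2
      linarith
end
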